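/- Let Z₁ = {c₁ + G₁λ : ‖λ‖_∞ ≤ 1} and Z₂ = {c₂ + G₂λ : ‖λ‖_∞ ≤ 1} be zonotopes in ℝ^d. If there exist γ ∈ ℝ^{n₂} and Γ ∈ ℝ^{n₂×n₁} such that c₁ = c₂ + G₂γ, G₁ = G₂Γ, and for every row i, |γ(i)| + Σ_j |Γ(i,j)| ≤ 1, then Z₁ ⊆ Z₂. -/

import Mathlib

open Matrix

/-- The zonotope `⟨c, G⟩`. -/
def zonoSet {d n : ℕ} (c : Fin d → ℝ) (G : Matrix (Fin d) (Fin n) ℝ) :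
    Set (Fin d → ℝ) :=
  {x | ∃ l : Fin n → ℝ, (∀ k, |l k| ≤ 1) ∧ x = c + G.mulVec l}

/-- sufficient conditions for inclusion between two zonotopes. -/
theorem zonotope_inclusion {d n₁ n₂ : ℕ}
    (c₁ : Fin d → ℝ) (G₁ : Matrix (Fin d) (Fin n₁) ℝ)
    (c₂ : Fin d → ℝ) (G₂ : Matrix (Fin d) (Fin n₂) ℝ)
    (γ : Fin n₂ → ℝ) (Γ : Matrix (Fin n₂) (Fin n₁) ℝ)
    (ha : c₁ = c₂ + G₂.mulVec γ)
    (hb : G₁ = G₂ * Γ)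
    (he : ∀ i, |γ i| + ∑ j, |Γ i j| ≤ 1) :
    zonoSet c₁ G₁ ⊆ zonoSet c₂ G₂ := by
  rintro x ⟨l, hl, rfl⟩
  refine ⟨γ + Γ.mulVec l, ?_, ?_⟩
  · intro k
    calc |(γ + Γ.mulVec l) k| ≤ |γ k| + |Γ.mulVec l k| := abs_add_le _ _
      _ ≤ |γ k| + ∑ j, |Γ k j| := by
          refine add_le_add_right ?_ _
          calc |Γ.mulVec l k| ≤ ∑ j, |Γ k j * l j| := by
                rw [mulVec, dotProduct]; exact Finset.abs_sum_le_sum_abs _ _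
            _ ≤ ∑ j, |Γ k j| := by
                refine Finset.sum_le_sum fun j _ => ?_
                rw [abs_mul]
                exact mul_le_of_le_one_right (abs_nonneg _) (hl j)
      _ ≤ 1 := he k
  · rw [ha, hb, mulVec_add, ← mulVec_mulVec, add_assoc]
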